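/- Let Γ = HNN(G, H, θ) be a non-ascending HNN extension with quasi-kernels K₋₁ and K₁. For any s ∈ S₋₁ \ {1} (a non-trivial left coset representative of H in G), one has K₁ ⊆ sτ K₋₁ τ⁻¹ s⁻¹; consequently the normal closures of K₋₁ and K₁ in Γ coincide. -/

import Mathlib

namespace HNNStmt

open HNNExtension

variable {G : Type*} [Group G] (A B : Subgroup G) (φ : A ≃* B)

/-- The stable letter `τ` of the paper's convention: `τ⁻¹ h τ = θ(h)` for `h ∈ H = A`,
where `θ = φ`. In Mathlib's `HNNExtension`, `t * of a * t⁻¹ = of (φ a)`, so `τ = t⁻¹`. -/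
def τ : HNNExtension G A B φ := (t : HNNExtension G A B φ)⁻¹

/-- `H₋₁ = H = A` and `H₁ = θ(H) = B`. -/
def Hsub (ε : ℤ) : Subgroup G := if ε = 1 then B else A

/-- The word `g₁ τ^{ε₁} g₂ τ^{ε₂} ⋯ g_n τ^{ε_n} g_{n+1}` (zero-based indexing). -/
def wordProd (gs : ℕ → G) (εs : ℕ → ℤ) (n : ℕ) : HNNExtension G A B φ :=
  ((List.range n).map (fun i => of (gs i) * (τ A B φ) ^ (εs i))).prod * of (gs n)

/-- All exponents are `±1`. -/
def IsSign (εs : ℕ → ℤ) (n : ℕ) : Prop := ∀ i < n, εs i = 1 ∨ εs i = -1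

/-- The word `g₁ τ^{ε₁} ⋯ g_n τ^{ε_n} g_{n+1}` is reduced: whenever `ε_{i+1} = -ε_i`,
the letter `g_{i+1} ∉ H_{ε_i}`. -/
def Reduced (gs : ℕ → G) (εs : ℕ → ℤ) (n : ℕ) : Prop :=
  ∀ i : ℕ, i + 1 < n → εs (i + 1) = -εs i → gs (i + 1) ∉ Hsub A B (εs i)

/-- `T_ε^†`: the set of elements of length `≥ 1`, type `ε`, and initial letter `1`,
described via reduced words: `g` admits a reduced expression with first exponent `ε`
and first letter lying in `H_{-ε}`. -/
def Tdag (ε : ℤ) : Set (HNNExtension G A B φ) :=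
  {g | ∃ (n : ℕ) (gs : ℕ → G) (εs : ℕ → ℤ), 1 ≤ n ∧ IsSign εs n ∧
    Reduced A B gs εs n ∧ g = wordProd A B φ gs εs n ∧ εs 0 = ε ∧ gs 0 ∈ Hsub A B (-ε)}

/-- The quasi-kernel `K_ε = ⋂_{r ∈ Γ \ T_ε^†} r H r⁻¹`. -/
def K (ε : ℤ) : Subgroup (HNNExtension G A B φ) :=
  ⨅ (r : HNNExtension G A B φ) (_ : r ∉ Tdag A B φ ε),
    (A.map (of : G →* HNNExtension G A B φ)).map (MulAut.conj r).toMonoidHom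

end HNNStmt

namespace HNNStmt

open HNNExtension

variable {G : Type*} [Group G] (A B : Subgroup G) (φ : A ≃* B)

def fcons {α : Type*} (a : α) (f : ℕ → α) : ℕ → α
  | 0 => a
  | n+1 => f n

lemma wordProd_succ (gs : ℕ → G) (εs : ℕ → ℤ) (n : ℕ) :
    wordProd A B φ gs εs (n+1) =
      of (gs 0) * τ A B φ ^ εs 0 *
        wordProd A B φ (fun i => gs (i+1)) (fun i => εs (i+1)) n := by
  unfold wordProd
  rw [List.range_succ_eq_map, List.map_cons, List.prod_cons, List.map_map]
  simp only [Function.comp_def, Nat.succ_eq_add_one, mul_assoc]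

lemma key (ε : ℤ) (hε : ε = 1 ∨ ε = -1) (s : G) (hs : s ∉ Hsub A B (-ε))
    (r : HNNExtension G A B φ) (hr : r ∉ Tdag A B φ (-ε)) :
    of s * τ A B φ ^ ε * r ∉ Tdag A B φ ε := by
  intro h
  apply hr
  obtain ⟨n, gs, εs, hn, hsign, hred, hprod, hε0, hg0⟩ := h
  obtain ⟨m, rfl⟩ : ∃ m, n = m + 1 := ⟨n - 1, (Nat.succ_pred_eq_of_pos hn).symm⟩
  refine ⟨m + 2, fcons 1 (fcons (s⁻¹ * gs 0) (fun i => gs (i+1))),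
    fcons (-ε) εs, by omega, ?_, ?_, ?_, rfl, by simpa [fcons] using one_mem _⟩
  · rintro (_ | i) hi
    · rcases hε with h | h <;> simp [fcons, h]
    · exact hsign i (by omega)
  · rintro (_ | j) hj hcond
    · simp only [fcons]
      intro hmem
      apply hs
      have := mul_mem hg0 (inv_mem hmem)
      simpa using this
    · exact hred j (by omega) hcond
  · rw [wordProd_succ, wordProd_succ]
    rw [wordProd_succ] at hprod
    simp only [fcons] at *
    have : r = (τ A B φ ^ ε)⁻¹ * (of s)⁻¹ *
        (of (gs 0) * τ A B φ ^ εs 0 *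
          wordProd A B φ (fun i => gs (i+1)) (fun i => εs (i+1)) m) := by
      rw [← hprod]; group
    rw [this, hε0]
    simp [map_mul, map_inv, zpow_neg]
    group

lemma K_le (ε : ℤ) (hε : ε = 1 ∨ ε = -1) (s : G) (hs : s ∉ Hsub A B (-ε)) :
    K A B φ ε ≤ (K A B φ (-ε)).map
      (MulAut.conj (of s * τ A B φ ^ ε)).toMonoidHom := by
  intro x hx
  simp only [K, Subgroup.mem_iInf] at hx
  rw [Subgroup.mem_map_equiv]
  simp only [K, Subgroup.mem_iInf]
  intro r hr
  have h1 := hx (of s * τ A B φ ^ ε * r) (key A B φ ε hε s hs r hr)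
  rw [Subgroup.mem_map_equiv] at h1 ⊢
  have heq : (MulAut.conj r).symm ((MulAut.conj (of s * τ A B φ ^ ε)).symm x)
      = (MulAut.conj (of s * τ A B φ ^ ε * r)).symm x := by
    simp only [MulAut.conj_symm_apply]
    group
  rw [heq]
  exact h1


end HNNStmt

open HNNExtension HNNStmt

/-- For a non-ascending HNN extension `Γ = HNN(G, H, θ)` with quasi-kernels
`K₋₁`, `K₁`, and any non-trivial left coset representative `s` of `H = A` in `G`
(i.e. `s ∉ H`), one has `K₁ ⊆ sτ K₋₁ τ⁻¹ s⁻¹`; consequently the normal closures of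
`K₋₁` and `K₁` coincide. -/
theorem stmt_11 {G : Type*} [Group G] (A B : Subgroup G) (φ : A ≃* B)
    (hA : A ≠ ⊤) (hB : B ≠ ⊤) (s : G) (hs : s ∉ A) :
    K A B φ 1 ≤ (K A B φ (-1)).map
        (MulAut.conj (of s * τ A B φ)).toMonoidHom ∧
    Subgroup.normalClosure (K A B φ (-1) : Set (HNNExtension G A B φ))
      = Subgroup.normalClosure (K A B φ 1 : Set (HNNExtension G A B φ)) := by
  have hs1 : s ∉ Hsub A B (-(1:ℤ)) := by simpa [Hsub] using hs
  have h1 : K A B φ 1 ≤ (K A B φ (-1)).map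
      (MulAut.conj (of s * τ A B φ)).toMonoidHom := by
    have h := K_le A B φ 1 (Or.inl rfl) s hs1
    simpa using h
  obtain ⟨s', hs'⟩ : ∃ x, x ∉ B := by
    by_contra h
    push_neg at h
    exact hB ((Subgroup.eq_top_iff' B).mpr h)
  have h2 : K A B φ (-1) ≤ (K A B φ 1).map
      (MulAut.conj (of s' * τ A B φ ^ (-1 : ℤ))).toMonoidHom := by
    have h := K_le A B φ (-1) (Or.inr rfl) s' (by simpa [Hsub] using hs')
    simpa using h
  refine ⟨h1, le_antisymm ?_ ?_⟩
  · apply Subgroup.normalClosure_le_normal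
    intro x hx
    obtain ⟨y, hy, hyx⟩ := h2 hx
    have : (of s' * τ A B φ ^ (-1 : ℤ)) * y * (of s' * τ A B φ ^ (-1 : ℤ))⁻¹
        ∈ Subgroup.normalClosure (K A B φ 1 : Set (HNNExtension G A B φ)) :=
      Subgroup.Normal.conj_mem inferInstance y (Subgroup.subset_normalClosure hy) _
    rw [← hyx]
    simpa [MulAut.conj_apply, mul_assoc] using this
  · apply Subgroup.normalClosure_le_normal
    intro x hx
    obtain ⟨y, hy, hyx⟩ := h1 hx
    have : (of s * τ A B φ) * y * (of s * τ A B φ)⁻¹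
        ∈ Subgroup.normalClosure (K A B φ (-1) : Set (HNNExtension G A B φ)) :=
      Subgroup.Normal.conj_mem inferInstance y (Subgroup.subset_normalClosure hy) _
    rw [← hyx]
    simpa [MulAut.conj_apply, mul_assoc] using this
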